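/- arXiv:2308.04843 — 3 statements merged into one kernel-verified Lean document; each statement's English description precedes it below -/
import Mathlib

section
/- There exists a constant M > 0 such that for every continuously differentiable function φ : ℝ² → ℝ with compact support, ‖φ‖_{L⁴} ≤ M · ‖φ‖_{L²}^{1/2} · ‖∇φ‖_{L²}^{1/2}, i.e. (∫_{ℝ²} |φ(x)|⁴ dx)^{1/4} ≤ M · (∫_{ℝ²} |φ(x)|² dx)^{1/4} · (∫_{ℝ²} |∇φ(x)|² dx)^{1/4}. -/
open MeasureTheory

/-- The `i`-th partial derivative of a function on `ℝ²`. -/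
noncomputable def pderiv2 (f : (Fin 2 → ℝ) → ℝ) (i : Fin 2) (x : Fin 2 → ℝ) : ℝ :=
  fderiv ℝ f x (Pi.single i 1)

open scoped ENNReal


private lemma opnorm_sq_le (L : (Fin 2 → ℝ) →L[ℝ] ℝ) :
    ‖L‖ ^ 2 ≤ 2 * ∑ i, (L (Pi.single i 1)) ^ 2 := by
  have h : ‖L‖ ≤ |L (Pi.single 0 1)| + |L (Pi.single 1 1)| := by
    refine L.opNorm_le_bound (by positivity) (fun x => ?_)
    have hx : x = x 0 • (Pi.single 0 1 : Fin 2 → ℝ) + x 1 • (Pi.single 1 1 : Fin 2 → ℝ) := by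
      ext i; fin_cases i <;> simp
    calc ‖L x‖ = ‖x 0 * L (Pi.single 0 1) + x 1 * L (Pi.single 1 1)‖ := by
          conv_lhs => rw [hx]
          simp [mul_comm]
      _ ≤ |x 0| * |L (Pi.single 0 1)| + |x 1| * |L (Pi.single 1 1)| := by
          simpa [Real.norm_eq_abs, abs_mul] using
            abs_add_le (x 0 * L (Pi.single 0 1)) (x 1 * L (Pi.single 1 1))
      _ ≤ ‖x‖ * |L (Pi.single 0 1)| + ‖x‖ * |L (Pi.single 1 1)| := by
          gcongr
          · exact norm_le_pi_norm x 0
          · exact norm_le_pi_norm x 1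
      _ = (|L (Pi.single 0 1)| + |L (Pi.single 1 1)|) * ‖x‖ := by ring
  calc ‖L‖ ^ 2 ≤ (|L (Pi.single 0 1)| + |L (Pi.single 1 1)|) ^ 2 := by
        have := norm_nonneg L; nlinarith
    _ ≤ 2 * ∑ i, (L (Pi.single i 1)) ^ 2 := by
        rw [Fin.sum_univ_two]
        nlinarith [sq_abs (L (Pi.single 0 1)), sq_abs (L (Pi.single 1 1)),
          sq_nonneg (|L (Pi.single 0 1)| - |L (Pi.single 1 1)|)]

/-- Two-dimensional Gagliardo–Nirenberg (Ladyzhenskaya) inequality: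
`‖φ‖_{L⁴} ≤ M ‖φ‖_{L²}^{1/2} ‖∇φ‖_{L²}^{1/2}` for compactly supported `C¹` functions on `ℝ²`. -/
theorem gagliardo_nirenberg_dim2 :
    ∃ M : ℝ, 0 < M ∧ ∀ φ : (Fin 2 → ℝ) → ℝ, ContDiff ℝ 1 φ → HasCompactSupport φ →
      (∫ x, |φ x| ^ 4) ^ ((1 : ℝ) / 4) ≤
        M * (∫ x, |φ x| ^ 2) ^ ((1 : ℝ) / 4) *
          (∫ x, ∑ i, (pderiv2 φ i x) ^ 2) ^ ((1 : ℝ) / 4) := by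
  refine ⟨(8 : ℝ) ^ ((1 : ℝ) / 4), by positivity, fun φ hφ h2φ => ?_⟩
  have hφd : Differentiable ℝ φ := hφ.differentiable one_ne_zero
  have hφc : Continuous φ := hφ.continuous
  have hDc : Continuous (fderiv ℝ φ) := hφ.continuous_fderiv one_ne_zero
  -- the squared function
  set u : (Fin 2 → ℝ) → ℝ := fun x => φ x ^ 2 with hu_def
  have hu : ContDiff ℝ 1 u := hφ.pow 2
  have h2u : HasCompactSupport u :=
    h2φ.comp_left (g := fun t : ℝ => t ^ 2) (by simp)
  have hfd : ∀ x, fderiv ℝ u x = (2 * φ x) • fderiv ℝ φ x := by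
    intro x
    have h := ((hφd x).hasFDerivAt.mul (hφd x).hasFDerivAt)
    have h2 : HasFDerivAt u ((2 * φ x) • fderiv ℝ φ x) x := by
      have : u = fun y => φ y * φ y := by ext y; simp [hu_def, sq]
      rw [this]
      rw [two_mul, add_smul]
      exact h
    exact h2.fderiv
  -- Sobolev inequality for u, with n = p = 2
  have hp : Real.HolderConjugate (Fintype.card (Fin 2)) 2 := by
    rw [Fintype.card_fin]
    constructor <;> norm_num
  have sob := MeasureTheory.lintegral_pow_le_pow_lintegral_fderiv_aux hp hu h2u
  -- notation
  set A : ℝ≥0∞ := ∫⁻ x, (‖φ x‖₊ : ℝ≥0∞) ^ (4 : ℝ) with hA_def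
  set B : ℝ≥0∞ := ∫⁻ x, (‖φ x‖₊ : ℝ≥0∞) ^ (2 : ℝ) with hB_def
  set G : ℝ≥0∞ := ∫⁻ x, (‖fderiv ℝ φ x‖₊ : ℝ≥0∞) ^ (2 : ℝ) with hG_def
  set S : ℝ≥0∞ := ∫⁻ x, ENNReal.ofReal (∑ i, (pderiv2 φ i x) ^ 2) with hS_def
  have hmf : AEMeasurable (fun x => (‖φ x‖₊ : ℝ≥0∞)) volume :=
    (ENNReal.continuous_coe.comp hφc.nnnorm).aemeasurable
  have hmg : AEMeasurable (fun x => (‖fderiv ℝ φ x‖₊ : ℝ≥0∞)) volume :=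
    (ENNReal.continuous_coe.comp hDc.nnnorm).aemeasurable
  -- step 1 : A ≤ 4 * B * G
  have step1 : A ≤ 4 * (B * G) := by
    have lhs_eq : (∫⁻ x, (‖u x‖₊ : ℝ≥0∞) ^ (2 : ℝ)) = A := by
      rw [hA_def]
      congr 1; ext x
      have : (‖u x‖₊ : ℝ≥0∞) = (‖φ x‖₊ : ℝ≥0∞) ^ (2 : ℝ) := by
        rw [show u x = φ x ^ 2 from rfl, nnnorm_pow, ENNReal.coe_pow,
          ← ENNReal.rpow_natCast]
        norm_num
      rw [this, ← ENNReal.rpow_mul]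
      norm_num
    have rhs_le : (∫⁻ x, (‖fderiv ℝ u x‖₊ : ℝ≥0∞)) ≤
        2 * (B ^ ((1:ℝ)/2) * G ^ ((1:ℝ)/2)) := by
      have e1 : (∫⁻ x, (‖fderiv ℝ u x‖₊ : ℝ≥0∞)) =
          2 * ∫⁻ x, (‖φ x‖₊ : ℝ≥0∞) * (‖fderiv ℝ φ x‖₊ : ℝ≥0∞) := by
        rw [← MeasureTheory.lintegral_const_mul' _ _ (by norm_num : (2:ℝ≥0∞) ≠ ⊤)]
        congr 1; ext x
        rw [hfd x, nnnorm_smul]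
        push_cast
        have : (‖(2 : ℝ) * φ x‖₊ : ℝ≥0∞) = 2 * (‖φ x‖₊ : ℝ≥0∞) := by
          rw [nnnorm_mul]
          push_cast
          norm_num
        rw [this]; ring
      rw [e1]
      gcongr
      have h22 := ENNReal.lintegral_mul_le_Lp_mul_Lq volume
        (Real.HolderTriple.mk (by norm_num) (by norm_num) (by norm_num) :
          Real.HolderConjugate 2 2) hmf hmg
      rw [hB_def, hG_def]
      simpa using h22
    calc A = ∫⁻ x, (‖u x‖₊ : ℝ≥0∞) ^ (2 : ℝ) := lhs_eq.symm
      _ ≤ (∫⁻ x, (‖fderiv ℝ u x‖₊ : ℝ≥0∞)) ^ (2 : ℝ) := sob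
      _ ≤ (2 * (B ^ ((1:ℝ)/2) * G ^ ((1:ℝ)/2))) ^ (2 : ℝ) := by
          gcongr
      _ = 4 * (B * G) := by
          rw [ENNReal.mul_rpow_of_nonneg _ _ (by norm_num : (0:ℝ) ≤ 2),
            ENNReal.mul_rpow_of_nonneg _ _ (by norm_num : (0:ℝ) ≤ 2),
            ← ENNReal.rpow_mul, ← ENNReal.rpow_mul,
            show ((2:ℝ≥0∞) ^ (2:ℝ)) = 4 by rw [ENNReal.rpow_two]; norm_num]
          norm_num
  -- step 2 : G ≤ 2 * S
  have step2 : G ≤ 2 * S := by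
    rw [hG_def, hS_def, ← MeasureTheory.lintegral_const_mul' _ _
      (by norm_num : (2:ℝ≥0∞) ≠ ⊤)]
    refine MeasureTheory.lintegral_mono fun x => ?_
    have hL := opnorm_sq_le (fderiv ℝ φ x)
    have e : (‖fderiv ℝ φ x‖₊ : ℝ≥0∞) ^ (2 : ℝ) =
        ENNReal.ofReal (‖fderiv ℝ φ x‖ ^ 2) := by
      rw [ENNReal.ofReal_pow (norm_nonneg _), ofReal_norm, enorm_eq_nnnorm,
        ← ENNReal.rpow_natCast]
      norm_num
    rw [e, ← ENNReal.ofReal_ofNat 2, ← ENNReal.ofReal_mul (by norm_num)]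
    refine ENNReal.ofReal_le_ofReal ?_
    simpa [pderiv2] using hL
  -- combine: A ≤ 8 * B * S
  have key : A ≤ 8 * (B * S) := by
    calc A ≤ 4 * (B * G) := step1
      _ ≤ 4 * (B * (2 * S)) := by gcongr
      _ = 8 * (B * S) := by ring
  -- convert to real integrals
  have hb_nonneg : (0:ℝ) ≤ ∫ x, |φ x| ^ 2 := integral_nonneg fun x => by positivity
  have hs_nonneg : (0:ℝ) ≤ ∫ x, ∑ i, (pderiv2 φ i x) ^ 2 :=
    integral_nonneg fun x => Finset.sum_nonneg fun i _ => sq_nonneg _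
  have ha_nonneg : (0:ℝ) ≤ ∫ x, |φ x| ^ 4 := integral_nonneg fun x => by positivity
  -- integrability
  have hint_a : Integrable (fun x => |φ x| ^ 4) := by
    refine Continuous.integrable_of_hasCompactSupport (by fun_prop) ?_
    exact h2φ.comp_left (g := fun t : ℝ => |t| ^ 4) (by simp)
  have hint_b : Integrable (fun x => |φ x| ^ 2) := by
    refine Continuous.integrable_of_hasCompactSupport (by fun_prop) ?_
    exact h2φ.comp_left (g := fun t : ℝ => |t| ^ 2) (by simp)
  have hsc : Continuous (fun x => ∑ i, (pderiv2 φ i x) ^ 2) := by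
    refine continuous_finset_sum _ fun i _ => ?_
    exact (hDc.clm_apply continuous_const).pow 2
  have hint_s : Integrable (fun x => ∑ i, (pderiv2 φ i x) ^ 2) := by
    refine Continuous.integrable_of_hasCompactSupport hsc ?_
    have : (fun x => ∑ i, (pderiv2 φ i x) ^ 2) =
        (fun L : (Fin 2 → ℝ) →L[ℝ] ℝ => ∑ i, (L (Pi.single i 1)) ^ 2) ∘ fderiv ℝ φ := by
      ext x; simp [pderiv2]
    rw [this]
    exact (h2φ.fderiv ℝ).comp_left (by simp)
  -- equalities of lintegrals with ofReal of integrals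
  have ha : ENNReal.ofReal (∫ x, |φ x| ^ 4) = A := by
    rw [MeasureTheory.ofReal_integral_eq_lintegral_ofReal hint_a
      (Filter.Eventually.of_forall fun x => by positivity), hA_def]
    congr 1; ext x
    rw [ENNReal.ofReal_pow (abs_nonneg _), ← Real.norm_eq_abs,
      ofReal_norm, enorm_eq_nnnorm, ← ENNReal.rpow_natCast]
    norm_num
  have hb : ENNReal.ofReal (∫ x, |φ x| ^ 2) = B := by
    rw [MeasureTheory.ofReal_integral_eq_lintegral_ofReal hint_b
      (Filter.Eventually.of_forall fun x => by positivity), hB_def]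
    congr 1; ext x
    rw [ENNReal.ofReal_pow (abs_nonneg _), ← Real.norm_eq_abs,
      ofReal_norm, enorm_eq_nnnorm, ← ENNReal.rpow_natCast]
    norm_num
  have hs : ENNReal.ofReal (∫ x, ∑ i, (pderiv2 φ i x) ^ 2) = S := by
    rw [MeasureTheory.ofReal_integral_eq_lintegral_ofReal hint_s
      (Filter.Eventually.of_forall fun x =>
        Finset.sum_nonneg fun i _ => sq_nonneg _), hS_def]
  -- go to reals
  have hreal : (∫ x, |φ x| ^ 4) ≤
      8 * ((∫ x, |φ x| ^ 2) * ∫ x, ∑ i, (pderiv2 φ i x) ^ 2) := by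
    have h8 : (8 : ℝ≥0∞) = ENNReal.ofReal 8 := by norm_num
    rw [← ENNReal.ofReal_le_ofReal_iff (by positivity)]
    calc ENNReal.ofReal (∫ x, |φ x| ^ 4) = A := ha
      _ ≤ 8 * (B * S) := key
      _ = ENNReal.ofReal (8 * ((∫ x, |φ x| ^ 2) * ∫ x, ∑ i, (pderiv2 φ i x) ^ 2)) := by
          rw [ENNReal.ofReal_mul (by norm_num), ENNReal.ofReal_mul hb_nonneg, hb, hs, h8]
  -- take fourth roots
  calc (∫ x, |φ x| ^ 4) ^ ((1 : ℝ) / 4)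
      ≤ (8 * ((∫ x, |φ x| ^ 2) * ∫ x, ∑ i, (pderiv2 φ i x) ^ 2)) ^ ((1 : ℝ) / 4) :=
        Real.rpow_le_rpow ha_nonneg hreal (by norm_num)
    _ = (8:ℝ) ^ ((1 : ℝ) / 4) * (∫ x, |φ x| ^ 2) ^ ((1 : ℝ) / 4) *
          (∫ x, ∑ i, (pderiv2 φ i x) ^ 2) ^ ((1 : ℝ) / 4) := by
        rw [Real.mul_rpow (by norm_num) (by positivity),
          Real.mul_rpow hb_nonneg hs_nonneg, mul_assoc]
end

section
/- There exists a constant M > 0 such that for every continuously differentiable, compactly supported u : ℝ² → ℝ² and every continuously differentiable, compactly supported C : ℝ² → ℝ, ‖C u‖_{L²} ≤ M ‖C‖_{L²}^{1/2} ‖∇C‖_{L²}^{1/2} ‖u‖_{L²}^{1/2} ‖∇u‖_{L²}^{1/2}, where ‖C u‖_{L²}² = ∫_{ℝ²} C(x)² |u(x)|² dx. -/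
open MeasureTheory

set_option maxHeartbeats 1000000

open scoped ENNReal NNReal

lemma opnorm_le_sqrt (L : (Fin 2 → ℝ) →L[ℝ] ℝ) :
    ‖L‖ ≤ Real.sqrt 2 * Real.sqrt ((L (Pi.single 0 1))^2 + (L (Pi.single 1 1))^2) := by
  set a := L (Pi.single 0 1)
  set b := L (Pi.single 1 1)
  have h1 : ‖L‖ ≤ |a| + |b| := by
    refine L.opNorm_le_bound (by positivity) fun y => ?_
    have hy : y = y 0 • ((Pi.single 0 1 : Fin 2 → ℝ)) + y 1 • ((Pi.single 1 1 : Fin 2 → ℝ)) := by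
      funext i
      fin_cases i <;> simp
    calc ‖L y‖ = ‖y 0 • a + y 1 • b‖ := by
          conv_lhs => rw [hy]
          simp [map_add, _root_.map_smul]
          rfl
      _ ≤ |y 0| * |a| + |y 1| * |b| := by
          simp only [smul_eq_mul, Real.norm_eq_abs]
          exact (abs_add_le _ _).trans (by rw [abs_mul, abs_mul])
      _ ≤ ‖y‖ * |a| + ‖y‖ * |b| := by
          gcongr
          · exact norm_le_pi_norm y 0
          · exact norm_le_pi_norm y 1
      _ = (|a| + |b|) * ‖y‖ := by ring
  refine h1.trans ?_
  rw [← Real.sqrt_mul (by norm_num)]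
  have h2 : |a| + |b| = Real.sqrt ((|a|+|b|)^2) := by
    rw [Real.sqrt_sq (by positivity)]
  rw [h2]
  apply Real.sqrt_le_sqrt
  nlinarith [sq_nonneg (|a| - |b|), sq_abs a, sq_abs b]

lemma pderiv2_continuous {f : (Fin 2 → ℝ) → ℝ} (hf : ContDiff ℝ 1 f) (i : Fin 2) :
    Continuous (pderiv2 f i) :=
  ((hf.fderiv_right (m := 0) le_rfl).continuous).clm_apply continuous_const

lemma pderiv2_compact_support {f : (Fin 2 → ℝ) → ℝ} (h2f : HasCompactSupport f) (i : Fin 2) :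
    HasCompactSupport (pderiv2 f i) :=
  (h2f.fderiv ℝ).comp_left (g := fun L : (Fin 2 → ℝ) →L[ℝ] ℝ => L (Pi.single i 1)) rfl

lemma ladyzhenskaya : ∃ K : ℝ, 0 < K ∧ ∀ f : (Fin 2 → ℝ) → ℝ,
    ContDiff ℝ 1 f → HasCompactSupport f →
    ∫ x, (f x)^4 ≤ K * (∫ x, (f x)^2) * (∫ x, ∑ i, (pderiv2 f i x)^2) := by
  set c := ((eLpNormLESNormFDerivOneConst (volume : Measure (Fin 2 → ℝ)) 2 : ℝ≥0) : ℝ) with hc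
  refine ⟨8 * c^2 + 1, by positivity, fun f hf h2f => ?_⟩
  have hfc : Continuous f := hf.continuous
  set g : (Fin 2 → ℝ) → ℝ := fun x => Real.sqrt (∑ i, (pderiv2 f i x)^2) with hgdef
  have hg : Continuous g := by
    apply Real.continuous_sqrt.comp
    exact continuous_finset_sum _ fun i _ => (pderiv2_continuous hf i).pow 2
  have h2g : HasCompactSupport g := by
    refine (h2f.fderiv ℝ).comp_left
      (g := fun L : (Fin 2 → ℝ) →L[ℝ] ℝ => Real.sqrt (∑ i, (L (Pi.single i 1))^2)) ?_
    simp
  have hgnn : ∀ x, 0 ≤ g x := fun x => Real.sqrt_nonneg _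
  have hgsq : ∀ x, (g x)^2 = ∑ i, (pderiv2 f i x)^2 := fun x =>
    Real.sq_sqrt (Finset.sum_nonneg fun i _ => sq_nonneg _)
  set A := ∫ x, (f x)^2 with hA
  set B := ∫ x, ∑ i, (pderiv2 f i x)^2 with hB
  have hAnn : 0 ≤ A := integral_nonneg fun x => sq_nonneg _
  have hBnn : 0 ≤ B := integral_nonneg fun x => Finset.sum_nonneg fun i _ => sq_nonneg _
  set S := ∫ x, (f x)^4 with hS
  have hSnn : 0 ≤ S := integral_nonneg fun x => by positivity
  -- the function v = f²
  set v : (Fin 2 → ℝ) → ℝ := fun x => f x * f x with hv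
  have hvc : ContDiff ℝ 1 v := hf.mul hf
  have h2v : HasCompactSupport v := h2f.mul_right
  have hwc : Continuous (fderiv ℝ v) := (hvc.fderiv_right (m := 0) le_rfl).continuous
  have h2w : HasCompactSupport (fderiv ℝ v) := h2v.fderiv ℝ
  -- Sobolev inequality
  have sobolev : eLpNorm v 2 volume ≤
      eLpNormLESNormFDerivOneConst (volume : Measure (Fin 2 → ℝ)) 2 *
        eLpNorm (fderiv ℝ v) 1 volume := by
    refine eLpNorm_le_eLpNorm_fderiv_one _ hvc h2v ?_
    have : (Module.finrank ℝ (Fin 2 → ℝ)) = 2 := by simp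
    rw [this]
    constructor
    · norm_num
    all_goals norm_num
  -- convert LHS
  have hL : eLpNorm v 2 volume = ENNReal.ofReal (S ^ ((2:ℝ))⁻¹) := by
    rw [(hvc.continuous.memLp_of_hasCompactSupport h2v).eLpNorm_eq_integral_rpow_norm
      two_ne_zero ENNReal.ofNat_ne_top]
    rw [show ((2:ℝ≥0∞)).toReal = (2:ℝ) from by simp]
    congr 2
    rw [hS]
    refine integral_congr_ae (Filter.Eventually.of_forall fun a => ?_)
    show ‖v a‖ ^ (2:ℝ) = f a ^ 4
    rw [Real.rpow_two, Real.norm_eq_abs, sq_abs]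
    show (f a * f a)^2 = f a ^ 4
    ring
  -- convert RHS
  set R := ∫ x, ‖fderiv ℝ v x‖ with hR
  have hRnn : 0 ≤ R := integral_nonneg fun x => norm_nonneg _
  have hR1 : eLpNorm (fderiv ℝ v) 1 volume = ENNReal.ofReal R := by
    rw [(hwc.memLp_of_hasCompactSupport h2w).eLpNorm_eq_integral_rpow_norm
      one_ne_zero ENNReal.one_ne_top]
    simp [hR]
  -- extract real inequality
  have key : S ^ ((2:ℝ))⁻¹ ≤ c * R := by
    rw [hL, hR1] at sobolev
    have hne : (eLpNormLESNormFDerivOneConst (volume : Measure (Fin 2 → ℝ)) 2 : ℝ≥0∞)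
        * ENNReal.ofReal R ≠ ⊤ := by
      exact ENNReal.mul_ne_top ENNReal.coe_ne_top ENNReal.ofReal_ne_top
    have := ENNReal.toReal_mono hne sobolev
    rwa [ENNReal.toReal_ofReal (by positivity), ENNReal.toReal_mul, ENNReal.coe_toReal,
      ENNReal.toReal_ofReal hRnn, ← hc] at this
  -- bound R pointwise
  have pointwise : ∀ x, ‖fderiv ℝ v x‖ ≤ (2 * Real.sqrt 2) * (|f x| * g x) := by
    intro x
    have hdf : DifferentiableAt ℝ f x := hf.differentiable one_ne_zero x
    have : fderiv ℝ v x = f x • fderiv ℝ f x + f x • fderiv ℝ f x := fderiv_fun_mul hdf hdf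
    rw [this]
    calc ‖f x • fderiv ℝ f x + f x • fderiv ℝ f x‖
        ≤ ‖f x • fderiv ℝ f x‖ + ‖f x • fderiv ℝ f x‖ := norm_add_le _ _
      _ = 2 * (|f x| * ‖fderiv ℝ f x‖) := by
          rw [norm_smul, Real.norm_eq_abs]; ring
      _ ≤ 2 * (|f x| * (Real.sqrt 2 * g x)) := by
          gcongr
          have := opnorm_le_sqrt (fderiv ℝ f x)
          rw [hgdef]
          simpa [pderiv2, Fin.sum_univ_two] using this
      _ = (2 * Real.sqrt 2) * (|f x| * g x) := by ring
  have hRb : R ≤ (2 * Real.sqrt 2) * ∫ x, |f x| * g x := by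
    rw [← integral_const_mul]
    refine integral_mono ?_ ?_ (fun x => pointwise x)
    · exact (hwc.norm).integrable_of_hasCompactSupport h2w.norm
    · refine Continuous.integrable_of_hasCompactSupport ?_ ?_
      · exact continuous_const.mul (hfc.abs.mul hg)
      · exact ((h2f.norm.mul_right (f := fun x => |f x|) (f' := g)).mul_left)
  -- Hölder
  have holder : ∫ x, |f x| * g x ≤ A ^ ((1:ℝ)/2) * B ^ ((1:ℝ)/2) := by
    have hconj : Real.HolderConjugate 2 2 := Real.HolderConjugate.two_two
    have h1 : MemLp (fun x => |f x|) (ENNReal.ofReal 2) volume :=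
      (hfc.abs).memLp_of_hasCompactSupport h2f.norm
    have h2 : MemLp g (ENNReal.ofReal 2) volume :=
      hg.memLp_of_hasCompactSupport h2g
    have := integral_mul_le_Lp_mul_Lq_of_nonneg hconj
      (Filter.Eventually.of_forall fun x => abs_nonneg _)
      (Filter.Eventually.of_forall hgnn) h1 h2
    have e1 : (∫ x, |f x| ^ (2:ℝ)) = A := by
      rw [hA]
      congr 1
      funext x
      rw [Real.rpow_two, sq_abs]
    have e2 : (∫ x, g x ^ (2:ℝ)) = B := by
      rw [hB]
      congr 1
      funext x
      rw [Real.rpow_two, hgsq]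
    rwa [e1, e2] at this
  -- combine
  have hRb2 : R ≤ (2 * Real.sqrt 2) * (A ^ ((1:ℝ)/2) * B ^ ((1:ℝ)/2)) := by
    refine hRb.trans ?_
    gcongr
  have hS2 : S ≤ (c * ((2 * Real.sqrt 2) * (A ^ ((1:ℝ)/2) * B ^ ((1:ℝ)/2))))^2 := by
    have hcnn : (0:ℝ) ≤ c := by rw [hc]; positivity
    have h1 : S ^ ((2:ℝ))⁻¹ ≤ c * ((2 * Real.sqrt 2) * (A ^ ((1:ℝ)/2) * B ^ ((1:ℝ)/2))) :=
      key.trans (by gcongr)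
    have h2 : (S ^ ((2:ℝ))⁻¹)^2 = S := by
      rw [← Real.rpow_natCast (S ^ ((2:ℝ))⁻¹) 2, ← Real.rpow_mul hSnn]
      norm_num
    calc S = (S ^ ((2:ℝ))⁻¹)^2 := h2.symm
      _ ≤ _ := by
          apply pow_le_pow_left₀ (Real.rpow_nonneg hSnn _) h1 2
  have hA2 : (A ^ ((1:ℝ)/2))^2 = A := by
    rw [← Real.rpow_natCast (A ^ ((1:ℝ)/2)) 2, ← Real.rpow_mul hAnn]
    norm_num
  have hB2 : (B ^ ((1:ℝ)/2))^2 = B := by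
    rw [← Real.rpow_natCast (B ^ ((1:ℝ)/2)) 2, ← Real.rpow_mul hBnn]
    norm_num
  have hsq2 : (Real.sqrt 2)^2 = 2 := Real.sq_sqrt (by norm_num)
  have hcnn : (0:ℝ) ≤ c := by rw [hc]; positivity
  calc S ≤ (c * ((2 * Real.sqrt 2) * (A ^ ((1:ℝ)/2) * B ^ ((1:ℝ)/2))))^2 := hS2
    _ = ((Real.sqrt 2)^2) * (4 * c^2) * ((A ^ ((1:ℝ)/2))^2) * ((B ^ ((1:ℝ)/2))^2) := by
        ring
    _ = 8 * c^2 * A * B := by rw [hsq2, hA2, hB2]; ring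
    _ ≤ (8 * c^2 + 1) * A * B := by nlinarith

lemma rpow_half_sq {x : ℝ} (hx : 0 ≤ x) : (x ^ ((1:ℝ)/2))^2 = x := by
  rw [← Real.rpow_natCast (x ^ ((1:ℝ)/2)) 2, ← Real.rpow_mul hx]
  norm_num

/-- Estimate of the product `C u` in `L²` (Lemma 4.4 of the paper):
`‖C u‖_{L²} ≤ M ‖C‖^{1/2} ‖∇C‖^{1/2} ‖u‖^{1/2} ‖∇u‖^{1/2}`. -/
theorem product_Cu_L2_estimate :
    ∃ M : ℝ, 0 < M ∧
      ∀ (u : (Fin 2 → ℝ) → (Fin 2 → ℝ)) (C : (Fin 2 → ℝ) → ℝ),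
        ContDiff ℝ 1 u → HasCompactSupport u →
        ContDiff ℝ 1 C → HasCompactSupport C →
        (∫ x, (C x) ^ 2 * ∑ i, (u x i) ^ 2) ^ ((1 : ℝ) / 2) ≤
          M * (∫ x, (C x) ^ 2) ^ ((1 : ℝ) / 4) *
            (∫ x, ∑ i, (pderiv2 C i x) ^ 2) ^ ((1 : ℝ) / 4) *
            (∫ x, ∑ i, (u x i) ^ 2) ^ ((1 : ℝ) / 4) *
            (∫ x, ∑ i, ∑ j, (pderiv2 (fun y => u y i) j x) ^ 2) ^ ((1 : ℝ) / 4) := by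
  obtain ⟨K, hK, hlad⟩ := ladyzhenskaya
  refine ⟨(2 * K^2) ^ ((1:ℝ)/4) + 1, by positivity, fun u C hu h2u hC h2C => ?_⟩
  -- component functions
  set f : Fin 2 → (Fin 2 → ℝ) → ℝ := fun i y => u y i with hfdef
  have hfc : ∀ i, ContDiff ℝ 1 (f i) := fun i => contDiff_pi.mp hu i
  have h2fc : ∀ i, HasCompactSupport (f i) := fun i =>
    h2u.comp_left (g := fun v : Fin 2 → ℝ => v i) rfl
  -- abbreviations
  set AC := ∫ x, (C x)^2 with hAC
  set BC := ∫ x, ∑ i, (pderiv2 C i x)^2 with hBC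
  set Au := ∫ x, ∑ i, (u x i)^2 with hAu
  set Bu := ∫ x, ∑ i, ∑ j, (pderiv2 (fun y => u y i) j x)^2 with hBu
  set T := ∫ x, (C x)^2 * ∑ i, (u x i)^2 with hT
  have hACnn : 0 ≤ AC := integral_nonneg fun x => sq_nonneg _
  have hBCnn : 0 ≤ BC := integral_nonneg fun x => Finset.sum_nonneg fun i _ => sq_nonneg _
  have hAunn : 0 ≤ Au := integral_nonneg fun x => Finset.sum_nonneg fun i _ => sq_nonneg _
  have hBunn : 0 ≤ Bu := integral_nonneg fun x => Finset.sum_nonneg fun i _ =>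
    Finset.sum_nonneg fun j _ => sq_nonneg _
  have hTnn : 0 ≤ T := integral_nonneg fun x =>
    mul_nonneg (sq_nonneg _) (Finset.sum_nonneg fun i _ => sq_nonneg _)
  -- integrability of basic pieces
  have hCsq_cs : HasCompactSupport (fun x => (C x)^2) :=
    h2C.comp_left (g := fun t : ℝ => t^2) (by norm_num)
  have husq_cs : ∀ i, HasCompactSupport (fun x => (u x i)^2) := fun i =>
    (h2fc i).comp_left (g := fun t : ℝ => t^2) (by norm_num)
  have hCu_int : ∀ i, Integrable (fun x => (C x)^2 * (u x i)^2) volume := fun i =>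
    Continuous.integrable_of_hasCompactSupport
      ((hC.continuous.pow 2).mul ((hfc i).continuous.pow 2))
      (hCsq_cs.mul_right)
  have hu_int : ∀ i, Integrable (fun x => (u x i)^2) volume := fun i =>
    Continuous.integrable_of_hasCompactSupport ((hfc i).continuous.pow 2) (husq_cs i)
  have hp_int : ∀ i, Integrable (fun x => ∑ j, (pderiv2 (fun y => u y i) j x)^2) volume := by
    intro i
    refine Continuous.integrable_of_hasCompactSupport ?_ ?_
    · exact continuous_finset_sum _ fun j _ => (pderiv2_continuous (hfc i) j).pow 2
    · refine ((h2fc i).fderiv ℝ).comp_left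
        (g := fun L : (Fin 2 → ℝ) →L[ℝ] ℝ => ∑ j, (L (Pi.single j 1))^2) ?_
      simp
  -- decomposition of T
  set P : Fin 2 → ℝ := fun i => ∫ x, (C x)^2 * (u x i)^2 with hPdef
  have hPnn : ∀ i, 0 ≤ P i := fun i => integral_nonneg fun x =>
    mul_nonneg (sq_nonneg _) (sq_nonneg _)
  have hTsplit : T = P 0 + P 1 := by
    rw [hT, ← integral_add (hCu_int 0) (hCu_int 1)]
    refine integral_congr_ae (Filter.Eventually.of_forall fun x => ?_)
    simp only [Fin.sum_univ_two]
    ring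
  have hAusplit : Au = (∫ x, (u x 0)^2) + ∫ x, (u x 1)^2 := by
    rw [hAu, ← integral_add (hu_int 0) (hu_int 1)]
    refine integral_congr_ae (Filter.Eventually.of_forall fun x => ?_)
    simp [Fin.sum_univ_two]
  have hBusplit : Bu = (∫ x, ∑ j, (pderiv2 (fun y => u y 0) j x)^2)
      + ∫ x, ∑ j, (pderiv2 (fun y => u y 1) j x)^2 := by
    rw [hBu, ← integral_add (hp_int 0) (hp_int 1)]
    refine integral_congr_ae (Filter.Eventually.of_forall fun x => ?_)
    simp [Fin.sum_univ_two]
  -- Hölder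
  have hC4nn : 0 ≤ ∫ x, (C x)^4 := integral_nonneg fun x => by positivity
  have hu4nn : ∀ i, 0 ≤ ∫ x, (u x i)^4 := fun i => integral_nonneg fun x => by positivity
  have holder : ∀ i, P i ≤ (∫ x, (C x)^4) ^ ((1:ℝ)/2) * (∫ x, (u x i)^4) ^ ((1:ℝ)/2) := by
    intro i
    have hconj : Real.HolderConjugate 2 2 := Real.HolderConjugate.two_two
    have h1 : MemLp (fun x => (C x)^2) (ENNReal.ofReal 2) volume :=
      (hC.continuous.pow 2).memLp_of_hasCompactSupport hCsq_cs
    have h2 : MemLp (fun x => (u x i)^2) (ENNReal.ofReal 2) volume :=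
      ((hfc i).continuous.pow 2).memLp_of_hasCompactSupport (husq_cs i)
    have := integral_mul_le_Lp_mul_Lq_of_nonneg hconj
      (Filter.Eventually.of_forall fun x => sq_nonneg (C x))
      (Filter.Eventually.of_forall fun x => sq_nonneg (u x i)) h1 h2
    have e1 : (∫ x, ((C x)^2) ^ (2:ℝ)) = ∫ x, (C x)^4 := by
      refine integral_congr_ae (Filter.Eventually.of_forall fun x => ?_)
      show ((C x)^2) ^ (2:ℝ) = (C x)^4
      rw [Real.rpow_two]; ring
    have e2 : (∫ x, ((u x i)^2) ^ (2:ℝ)) = ∫ x, (u x i)^4 := by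
      refine integral_congr_ae (Filter.Eventually.of_forall fun x => ?_)
      show ((u x i)^2) ^ (2:ℝ) = (u x i)^4
      rw [Real.rpow_two]; ring
    rwa [e1, e2] at this
  have hP2 : ∀ i, (P i)^2 ≤ (∫ x, (C x)^4) * (∫ x, (u x i)^4) := by
    intro i
    calc (P i)^2 ≤ ((∫ x, (C x)^4) ^ ((1:ℝ)/2) * (∫ x, (u x i)^4) ^ ((1:ℝ)/2))^2 :=
          pow_le_pow_left₀ (hPnn i) (holder i) 2
      _ = ((∫ x, (C x)^4) ^ ((1:ℝ)/2))^2 * ((∫ x, (u x i)^4) ^ ((1:ℝ)/2))^2 := by ring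
      _ = (∫ x, (C x)^4) * (∫ x, (u x i)^4) := by
          rw [rpow_half_sq hC4nn, rpow_half_sq (hu4nn i)]
  -- Ladyzhenskaya bounds
  have hladC : (∫ x, (C x)^4) ≤ K * AC * BC := hlad C hC h2C
  have hladu : ∀ i, (∫ x, (u x i)^4) ≤ K * (∫ x, (u x i)^2)
      * (∫ x, ∑ j, (pderiv2 (fun y => u y i) j x)^2) := fun i =>
    hlad (fun y => u y i) (hfc i) (h2fc i)
  -- combine into T² ≤ 2 K² AC BC Au Bu
  set a : Fin 2 → ℝ := fun i => ∫ x, (u x i)^2 with hadef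
  set b : Fin 2 → ℝ := fun i => ∫ x, ∑ j, (pderiv2 (fun y => u y i) j x)^2 with hbdef
  have hann : ∀ i, 0 ≤ a i := fun i => integral_nonneg fun x => sq_nonneg _
  have hbnn : ∀ i, 0 ≤ b i := fun i => integral_nonneg fun x =>
    Finset.sum_nonneg fun j _ => sq_nonneg _
  have hPi : ∀ i, (P i)^2 ≤ (K * AC * BC) * (K * a i * b i) := by
    intro i
    refine (hP2 i).trans ?_
    exact mul_le_mul hladC (hladu i) (hu4nn i) (by positivity)
  have hTsq : T^2 ≤ 2 * K^2 * (AC * BC * Au * Bu) := by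
    have h1 : T^2 ≤ 2 * ((P 0)^2 + (P 1)^2) := by
      rw [hTsplit]
      nlinarith [sq_nonneg (P 0 - P 1)]
    have h2 : (P 0)^2 + (P 1)^2 ≤ (K * AC * BC) * (K * a 0 * b 0)
        + (K * AC * BC) * (K * a 1 * b 1) := add_le_add (hPi 0) (hPi 1)
    have h3 : a 0 * b 0 + a 1 * b 1 ≤ (a 0 + a 1) * (b 0 + b 1) := by
      nlinarith [mul_nonneg (hann 0) (hbnn 1), mul_nonneg (hann 1) (hbnn 0)]
    have h4 : (K * AC * BC) * (K * a 0 * b 0) + (K * AC * BC) * (K * a 1 * b 1)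
        = K^2 * AC * BC * (a 0 * b 0 + a 1 * b 1) := by ring
    have h5 : K^2 * AC * BC * (a 0 * b 0 + a 1 * b 1)
        ≤ K^2 * AC * BC * ((a 0 + a 1) * (b 0 + b 1)) := by
      apply mul_le_mul_of_nonneg_left h3 (by positivity)
    have h6 : (a 0 + a 1) * (b 0 + b 1) = Au * Bu := by
      rw [hAusplit, hBusplit]
    calc T^2 ≤ 2 * ((P 0)^2 + (P 1)^2) := h1
      _ ≤ 2 * (K^2 * AC * BC * (a 0 * b 0 + a 1 * b 1)) := by
          rw [← h4]; exact mul_le_mul_of_nonneg_left h2 (by norm_num)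
      _ ≤ 2 * (K^2 * AC * BC * ((a 0 + a 1) * (b 0 + b 1))) := by
          exact mul_le_mul_of_nonneg_left h5 (by norm_num)
      _ = 2 * K^2 * (AC * BC * Au * Bu) := by rw [h6]; ring
  -- final rpow manipulation
  have e0 : T ^ ((1:ℝ)/2) = (T^2) ^ ((1:ℝ)/4) := by
    rw [← Real.rpow_natCast T 2, ← Real.rpow_mul hTnn]
    norm_num
  have e1 : (T^2) ^ ((1:ℝ)/4) ≤ (2 * K^2 * (AC * BC * Au * Bu)) ^ ((1:ℝ)/4) :=
    Real.rpow_le_rpow (sq_nonneg T) hTsq (by norm_num)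
  have e2 : (2 * K^2 * (AC * BC * Au * Bu)) ^ ((1:ℝ)/4)
      = (2 * K^2) ^ ((1:ℝ)/4) * AC ^ ((1:ℝ)/4) * BC ^ ((1:ℝ)/4)
        * Au ^ ((1:ℝ)/4) * Bu ^ ((1:ℝ)/4) := by
    rw [Real.mul_rpow (by positivity) (by positivity),
      Real.mul_rpow (by positivity) (by positivity),
      Real.mul_rpow (by positivity) (by positivity),
      Real.mul_rpow (by positivity) (by positivity),
      Real.mul_rpow (by positivity) (by positivity)]
    ring
  calc T ^ ((1:ℝ)/2) ≤ (2 * K^2) ^ ((1:ℝ)/4) * AC ^ ((1:ℝ)/4) * BC ^ ((1:ℝ)/4)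
        * Au ^ ((1:ℝ)/4) * Bu ^ ((1:ℝ)/4) := by
        rw [e0, ← e2]; exact e1
    _ ≤ ((2 * K^2) ^ ((1:ℝ)/4) + 1) * AC ^ ((1:ℝ)/4) * BC ^ ((1:ℝ)/4)
        * Au ^ ((1:ℝ)/4) * Bu ^ ((1:ℝ)/4) := by
        gcongr
        linarith [Real.rpow_nonneg (show (0:ℝ) ≤ 2*K^2 by positivity) ((1:ℝ)/4)]
end

section
/- There exists a constant M > 0 such that for every continuously differentiable, compactly supported u : ℝ² → ℝ² and every twice continuously differentiable, compactly supported C : ℝ² → ℝ, ‖u · ∇C‖_{L²} ≤ M ‖u‖_{L²}^{1/2} ‖∇u‖_{L²}^{1/2} ‖∇C‖_{L²}^{1/2} ‖D²C‖_{L²}^{1/2}, where (u · ∇C)(x) = u₁(x)∂₁C(x) + u₂(x)∂₂C(x) and ‖D²C‖_{L²}² = ∫_{ℝ²} Σ_{i,j} (∂ᵢ∂ⱼC)² dx. -/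
open MeasureTheory Module
open scoped ENNReal NNReal

lemma conj22 : Real.HolderConjugate ((finrank ℝ (Fin 2 → ℝ) : ℕ) : ℝ) 2 := by
  have : finrank ℝ (Fin 2 → ℝ) = 2 := by simp [finrank_fintype_fun_eq_card]
  rw [this]; exact ⟨by norm_num, by norm_num, by norm_num⟩

lemma conj2 : Real.HolderConjugate 2 2 := ⟨by norm_num, by norm_num, by norm_num⟩

lemma single_decomp (v : Fin 2 → ℝ) : v = ∑ j, v j • (Pi.single j 1 : Fin 2 → ℝ) := by
  funext k
  simp [Finset.sum_apply, Pi.single_apply]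

lemma comp_hasFDerivAt {u : (Fin 2 → ℝ) → (Fin 2 → ℝ)} (hu : Differentiable ℝ u)
    (i : Fin 2) (x : Fin 2 → ℝ) :
    HasFDerivAt (fun y => u y i)
      ((ContinuousLinearMap.proj (R := ℝ) (φ := fun _ : Fin 2 => ℝ) i).comp (fderiv ℝ u x)) x := by
  exact (ContinuousLinearMap.proj (R := ℝ) (φ := fun _ : Fin 2 => ℝ) i).hasFDerivAt.comp x (hu x).hasFDerivAt

lemma pderiv2_comp {u : (Fin 2 → ℝ) → (Fin 2 → ℝ)} (hu : Differentiable ℝ u)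
    (i j : Fin 2) (x : Fin 2 → ℝ) :
    pderiv2 (fun y => u y i) j x = fderiv ℝ u x (Pi.single j 1) i := by
  rw [pderiv2, (comp_hasFDerivAt hu i x).fderiv]; rfl

lemma sumsq_hasFDerivAt {u : (Fin 2 → ℝ) → (Fin 2 → ℝ)} (hu : Differentiable ℝ u)
    (x : Fin 2 → ℝ) :
    HasFDerivAt (fun y => ∑ i, (u y i)^2)
      (∑ i, (2 * u x i) • ((ContinuousLinearMap.proj (R := ℝ) (φ := fun _ : Fin 2 => ℝ) i).comp
        (fderiv ℝ u x))) x := by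
  apply HasFDerivAt.fun_sum
  intro i _
  have h := (comp_hasFDerivAt hu i x).fun_mul (comp_hasFDerivAt hu i x)
  have : (fun y => u y i * u y i) = fun y => (u y i)^2 := by funext y; ring
  rw [this] at h
  rw [two_mul, add_smul]; exact h

lemma grad_sumsq_bound {u : (Fin 2 → ℝ) → (Fin 2 → ℝ)} (hu : ContDiff ℝ 1 u) (x : Fin 2 → ℝ) :
    ‖fderiv ℝ (fun y => ∑ i, (u y i)^2) x‖ ≤
      2 * Real.sqrt 2 * Real.sqrt (∑ i, (u x i)^2) *
        Real.sqrt (∑ i, ∑ j, (fderiv ℝ u x (Pi.single j 1) i)^2) := by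
  have hud : Differentiable ℝ u := hu.differentiable one_ne_zero
  rw [(sumsq_hasFDerivAt hud x).fderiv]
  set P := ∑ i, (u x i)^2 with hP
  set Q := ∑ i, ∑ j, (fderiv ℝ u x (Pi.single j 1) i)^2 with hQ
  have hP0 : 0 ≤ P := Finset.sum_nonneg fun i _ => sq_nonneg _
  have hQ0 : 0 ≤ Q := Finset.sum_nonneg fun i _ => Finset.sum_nonneg fun j _ => sq_nonneg _
  apply ContinuousLinearMap.opNorm_le_bound _ (by positivity)
  intro v
  have happ : (∑ i, (2 * u x i) • ((ContinuousLinearMap.proj (R := ℝ) (φ := fun _ : Fin 2 => ℝ) i).comp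
      (fderiv ℝ u x))) v = 2 * ∑ i, u x i * fderiv ℝ u x v i := by
    rw [ContinuousLinearMap.sum_apply, Finset.mul_sum]
    refine Finset.sum_congr rfl fun i _ => ?_
    simp [mul_assoc]
  rw [happ]
  -- bound ∑ i (Dv)_i^2
  have hw : ∀ i, (fderiv ℝ u x v i)^2 ≤ (2 * ‖v‖^2) * ∑ j, (fderiv ℝ u x (Pi.single j 1) i)^2 := by
    intro i
    have hv : fderiv ℝ u x v i = ∑ j, v j * fderiv ℝ u x (Pi.single j 1) i := by
      conv_lhs => rw [show v = ∑ j, v j • (Pi.single j 1 : Fin 2 → ℝ) from single_decomp v]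
      rw [map_sum]
      simp [Finset.sum_apply]
    rw [hv]
    calc (∑ j, v j * fderiv ℝ u x (Pi.single j 1) i)^2
        ≤ (∑ j, (v j)^2) * ∑ j, (fderiv ℝ u x (Pi.single j 1) i)^2 :=
          Finset.sum_mul_sq_le_sq_mul_sq _ _ _
      _ ≤ (2 * ‖v‖^2) * ∑ j, (fderiv ℝ u x (Pi.single j 1) i)^2 := by
          apply mul_le_mul_of_nonneg_right _ (Finset.sum_nonneg fun j _ => sq_nonneg _)
          have : ∀ j : Fin 2, (v j)^2 ≤ ‖v‖^2 := fun j => by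
            have := norm_le_pi_norm v j
            calc (v j)^2 = ‖v j‖^2 := by rw [Real.norm_eq_abs, sq_abs]
              _ ≤ ‖v‖^2 := by gcongr <;> exact norm_le_pi_norm v j
          calc (∑ j, (v j)^2) ≤ ∑ _j : Fin 2, ‖v‖^2 := Finset.sum_le_sum fun j _ => this j
            _ = 2 * ‖v‖^2 := by simp [Finset.sum_const]
            
  have hWsum : ∑ i, (fderiv ℝ u x v i)^2 ≤ (2 * ‖v‖^2) * Q := by
    calc ∑ i, (fderiv ℝ u x v i)^2 ≤ ∑ i, (2 * ‖v‖^2) * ∑ j, (fderiv ℝ u x (Pi.single j 1) i)^2 :=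
        Finset.sum_le_sum fun i _ => hw i
      _ = (2 * ‖v‖^2) * Q := by rw [hQ, Finset.mul_sum]
  have hCS : (∑ i, u x i * fderiv ℝ u x v i)^2 ≤ P * ((2 * ‖v‖^2) * Q) := by
    calc (∑ i, u x i * fderiv ℝ u x v i)^2
        ≤ (∑ i, (u x i)^2) * ∑ i, (fderiv ℝ u x v i)^2 := Finset.sum_mul_sq_le_sq_mul_sq _ _ _
      _ ≤ P * ((2 * ‖v‖^2) * Q) := by
          rw [← hP]
          exact mul_le_mul_of_nonneg_left hWsum hP0
  have habs : |∑ i, u x i * fderiv ℝ u x v i| ≤ Real.sqrt (P * ((2 * ‖v‖^2) * Q)) :=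
    Real.abs_le_sqrt hCS
  calc ‖2 * ∑ i, u x i * fderiv ℝ u x v i‖
      = 2 * |∑ i, u x i * fderiv ℝ u x v i| := by
        rw [Real.norm_eq_abs, abs_mul]; norm_num
    _ ≤ 2 * Real.sqrt (P * ((2 * ‖v‖^2) * Q)) := by linarith
    _ = 2 * Real.sqrt 2 * Real.sqrt P * Real.sqrt Q * ‖v‖ := by
        rw [Real.sqrt_mul hP0, Real.sqrt_mul (by positivity), Real.sqrt_mul (by norm_num : (0:ℝ) ≤ 2),
          Real.sqrt_sq (norm_nonneg v)]
        ring

lemma holder2 {f g : (Fin 2 → ℝ) → ℝ} (hfc : Continuous f) (hgc : Continuous g)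
    (hfs : HasCompactSupport f) (hgs : HasCompactSupport g)
    (hf0 : ∀ x, 0 ≤ f x) (hg0 : ∀ x, 0 ≤ g x) :
    ∫ x, f x * g x ≤ Real.sqrt (∫ x, (f x)^2) * Real.sqrt (∫ x, (g x)^2) := by
  have hf2 : MemLp f (ENNReal.ofReal 2) volume := hfc.memLp_of_hasCompactSupport hfs
  have hg2 : MemLp g (ENNReal.ofReal 2) volume := hgc.memLp_of_hasCompactSupport hgs
  have h := integral_mul_le_Lp_mul_Lq_of_nonneg conj2
    (Filter.Eventually.of_forall hf0) (Filter.Eventually.of_forall hg0) hf2 hg2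
  calc ∫ x, f x * g x ≤ (∫ x, f x ^ (2:ℝ)) ^ (1/(2:ℝ)) * (∫ x, g x ^ (2:ℝ)) ^ (1/(2:ℝ)) := h
    _ = Real.sqrt (∫ x, (f x)^2) * Real.sqrt (∫ x, (g x)^2) := by
      simp_rw [Real.rpow_two]
      rw [← Real.sqrt_eq_rpow, ← Real.sqrt_eq_rpow]

lemma lady_scalar : ∃ K : ℝ, 0 ≤ K ∧ ∀ g : (Fin 2 → ℝ) → ℝ, ContDiff ℝ 1 g → HasCompactSupport g →
    ∫ x, (g x)^2 ≤ K * (∫ x, ‖fderiv ℝ g x‖)^2 := by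
  refine ⟨((lintegralPowLePowLIntegralFDerivConst (volume : Measure (Fin 2 → ℝ)) 2 : ℝ≥0) : ℝ),
    NNReal.coe_nonneg _, fun g hg h2g => ?_⟩
  have key := lintegral_pow_le_pow_lintegral_fderiv (volume : Measure (Fin 2 → ℝ)) hg h2g conj22
  have hgc : Continuous g := hg.continuous
  have hfdc : Continuous (fderiv ℝ g) := hg.continuous_fderiv one_ne_zero
  have hfds : HasCompactSupport (fderiv ℝ g) := (HasCompactSupport.fderiv (𝕜 := ℝ) h2g)
  have hfd : Integrable (fderiv ℝ g) := hfdc.integrable_of_hasCompactSupport hfds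
  set I1 := ∫⁻ x, (‖g x‖₊ : ℝ≥0∞) ^ (2:ℝ) with hI1
  set I2 := ∫⁻ x, (‖fderiv ℝ g x‖₊ : ℝ≥0∞) with hI2
  have hI2top : I2 ≠ ⊤ := hfd.2.ne
  have e1 : ∫ x, (g x)^2 = I1.toReal := by
    rw [integral_eq_lintegral_of_nonneg_ae (Filter.Eventually.of_forall fun x => sq_nonneg _)
      ((hgc.pow 2).aestronglyMeasurable)]
    congr 1
    apply lintegral_congr fun x => ?_
    have h1 : (g x)^2 = ‖g x‖^2 := by rw [Real.norm_eq_abs, sq_abs]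
    rw [h1, ENNReal.ofReal_pow (norm_nonneg _), ofReal_norm, enorm_eq_nnnorm,
      show ((2:ℝ)) = ((2:ℕ):ℝ) by norm_num, ENNReal.rpow_natCast]
  have e2 : ∫ x, ‖fderiv ℝ g x‖ = I2.toReal := by
    rw [integral_eq_lintegral_of_nonneg_ae (Filter.Eventually.of_forall fun x => norm_nonneg _)
      (hfdc.norm.aestronglyMeasurable)]
    congr 1
    exact lintegral_congr fun x => ofReal_norm _
  have hrhs_top : (lintegralPowLePowLIntegralFDerivConst (volume : Measure (Fin 2 → ℝ)) 2 : ℝ≥0∞)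
      * I2 ^ (2:ℝ) ≠ ⊤ := by
    exact ENNReal.mul_ne_top ENNReal.coe_ne_top (by
      exact ENNReal.rpow_ne_top_of_nonneg (by norm_num) hI2top)
  rw [e1, e2]
  calc I1.toReal ≤ ((lintegralPowLePowLIntegralFDerivConst (volume : Measure (Fin 2 → ℝ)) 2 : ℝ≥0∞)
      * I2 ^ (2:ℝ)).toReal := ENNReal.toReal_mono hrhs_top key
    _ = _ := by
      rw [ENNReal.toReal_mul, ← ENNReal.toReal_rpow,
        show ((2:ℝ)) = ((2:ℕ):ℝ) by norm_num, Real.rpow_natCast]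
      simp

lemma lady_vec : ∃ K : ℝ, 0 ≤ K ∧
    ∀ u : (Fin 2 → ℝ) → (Fin 2 → ℝ), ContDiff ℝ 1 u → HasCompactSupport u →
    ∫ x, (∑ i, (u x i)^2)^2 ≤ K * (∫ x, ∑ i, (u x i)^2) *
      (∫ x, ∑ i, ∑ j, (pderiv2 (fun y => u y i) j x)^2) := by
  obtain ⟨K, hK0, hK⟩ := lady_scalar
  refine ⟨8 * K, by positivity, fun u hu h2u => ?_⟩
  have hud : Differentiable ℝ u := hu.differentiable one_ne_zero
  set g := fun x => ∑ i, (u x i)^2 with hg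
  set P := fun x => ∑ i, (u x i)^2 with hPdef
  set Q := fun x => ∑ i, ∑ j, (fderiv ℝ u x (Pi.single j 1) i)^2 with hQdef
  have hgcd : ContDiff ℝ 1 g := ContDiff.sum fun i _ => ((contDiff_pi.mp hu) i).pow 2
  have hgs : HasCompactSupport g := by
    have : g = (fun w : Fin 2 → ℝ => ∑ i, (w i)^2) ∘ u := rfl
    rw [this]; exact h2u.comp_left (by simp)
  have huc : Continuous u := hu.continuous
  have hPc : Continuous P := hgcd.continuous
  have hfduc : Continuous (fderiv ℝ u) := hu.continuous_fderiv one_ne_zero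
  have hQc : Continuous Q := by
    apply continuous_finset_sum _ fun i _ => continuous_finset_sum _ fun j _ => ?_
    exact ((continuous_apply i).comp ((ContinuousLinearMap.apply ℝ (Fin 2 → ℝ)
      ((Pi.single j 1 : Fin 2 → ℝ))).continuous.comp hfduc)).pow 2
  have hfds : HasCompactSupport (fderiv ℝ u) := HasCompactSupport.fderiv (𝕜 := ℝ) h2u
  have hQs : HasCompactSupport Q := by
    have : Q = (fun L : (Fin 2 → ℝ) →L[ℝ] (Fin 2 → ℝ) =>
        ∑ i, ∑ j, (L (Pi.single j 1) i)^2) ∘ fderiv ℝ u := rfl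
    rw [this]; exact hfds.comp_left (by simp)
  have hP0 : ∀ x, 0 ≤ P x := fun x => Finset.sum_nonneg fun i _ => sq_nonneg _
  have hQ0 : ∀ x, 0 ≤ Q x := fun x =>
    Finset.sum_nonneg fun i _ => Finset.sum_nonneg fun j _ => sq_nonneg _
  have hsqrtP : HasCompactSupport (fun x => Real.sqrt (P x)) := by
    have : (fun x => Real.sqrt (P x)) = Real.sqrt ∘ P := rfl
    rw [this]; exact hgs.comp_left Real.sqrt_zero
  have hsqrtQ : HasCompactSupport (fun x => Real.sqrt (Q x)) := by
    have : (fun x => Real.sqrt (Q x)) = Real.sqrt ∘ Q := rfl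
    rw [this]; exact hQs.comp_left Real.sqrt_zero
  have hsqrtPc : Continuous (fun x => Real.sqrt (P x)) := Real.continuous_sqrt.comp hPc
  have hsqrtQc : Continuous (fun x => Real.sqrt (Q x)) := Real.continuous_sqrt.comp hQc
  -- step 1 : lady_scalar
  have h1 : ∫ x, (g x)^2 ≤ K * (∫ x, ‖fderiv ℝ g x‖)^2 := hK g hgcd hgs
  -- step 2 : pointwise bound of the gradient
  have hptw : ∀ x, ‖fderiv ℝ g x‖ ≤ 2*Real.sqrt 2 * (Real.sqrt (P x) * Real.sqrt (Q x)) := by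
    intro x
    have := grad_sumsq_bound hu x
    calc ‖fderiv ℝ g x‖ ≤ 2 * Real.sqrt 2 * Real.sqrt (P x) * Real.sqrt (Q x) := this
      _ = 2*Real.sqrt 2 * (Real.sqrt (P x) * Real.sqrt (Q x)) := by ring
  have hint1 : Integrable (fun x => ‖fderiv ℝ g x‖) :=
    ((hgcd.continuous_fderiv one_ne_zero).norm).integrable_of_hasCompactSupport
      (HasCompactSupport.fderiv (𝕜 := ℝ) hgs).norm
  have hintb : Integrable (fun x => 2*Real.sqrt 2 * (Real.sqrt (P x) * Real.sqrt (Q x))) := by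
    apply Continuous.integrable_of_hasCompactSupport
    · exact continuous_const.mul (hsqrtPc.mul hsqrtQc)
    · exact ((hsqrtQ.mul_left (f := fun x => Real.sqrt (P x))).mul_left
        (f := fun _ => 2*Real.sqrt 2))
  have h2 : ∫ x, ‖fderiv ℝ g x‖ ≤
      2*Real.sqrt 2 * ∫ x, Real.sqrt (P x) * Real.sqrt (Q x) := by
    rw [← MeasureTheory.integral_const_mul]
    exact integral_mono hint1 hintb hptw
  have h3 : ∫ x, Real.sqrt (P x) * Real.sqrt (Q x) ≤
      Real.sqrt (∫ x, P x) * Real.sqrt (∫ x, Q x) := by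
    have h := holder2 hsqrtPc hsqrtQc hsqrtP hsqrtQ
      (fun x => Real.sqrt_nonneg _) (fun x => Real.sqrt_nonneg _)
    have eP : (fun x => (Real.sqrt (P x))^2) = P := funext fun x => Real.sq_sqrt (hP0 x)
    have eQ : (fun x => (Real.sqrt (Q x))^2) = Q := funext fun x => Real.sq_sqrt (hQ0 x)
    simpa [eP, eQ] using h
  have hIP0 : 0 ≤ ∫ x, P x := integral_nonneg hP0
  have hIQ0 : 0 ≤ ∫ x, Q x := integral_nonneg hQ0
  have hnorm0 : 0 ≤ ∫ x, ‖fderiv ℝ g x‖ := integral_nonneg fun x => norm_nonneg _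
  have h4 : (∫ x, ‖fderiv ℝ g x‖)^2 ≤ 8 * (∫ x, P x) * (∫ x, Q x) := by
    have hb : ∫ x, ‖fderiv ℝ g x‖ ≤
        2*Real.sqrt 2 * (Real.sqrt (∫ x, P x) * Real.sqrt (∫ x, Q x)) := by
      refine h2.trans ?_
      have h2pos : (0:ℝ) ≤ 2*Real.sqrt 2 := by positivity
      nlinarith [h3]
    calc (∫ x, ‖fderiv ℝ g x‖)^2
        ≤ (2*Real.sqrt 2 * (Real.sqrt (∫ x, P x) * Real.sqrt (∫ x, Q x)))^2 :=
          pow_le_pow_left₀ hnorm0 hb 2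
      _ = (2:ℝ)^2 * (Real.sqrt 2)^2 * ((Real.sqrt (∫ x, P x))^2 * (Real.sqrt (∫ x, Q x))^2) := by
          ring
      _ = 8 * (∫ x, P x) * (∫ x, Q x) := by
          rw [Real.sq_sqrt (by norm_num : (0:ℝ) ≤ 2), Real.sq_sqrt hIP0, Real.sq_sqrt hIQ0]
          ring
  have hfinal : ∫ x, (P x)^2 ≤ 8 * K * (∫ x, P x) * (∫ x, Q x) := by
    calc ∫ x, (P x)^2 ≤ K * (∫ x, ‖fderiv ℝ g x‖)^2 := h1
      _ ≤ K * (8 * (∫ x, P x) * (∫ x, Q x)) := by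
          exact mul_le_mul_of_nonneg_left h4 hK0
      _ = 8 * K * (∫ x, P x) * (∫ x, Q x) := by ring
  have hQeq : (fun x => ∑ i, ∑ j, (pderiv2 (fun y => u y i) j x)^2) = Q := by
    funext x
    exact Finset.sum_congr rfl fun i _ => Finset.sum_congr rfl fun j _ => by
      rw [pderiv2_comp hud]
  calc ∫ x, (∑ i, (u x i)^2)^2 ≤ 8 * K * (∫ x, P x) * (∫ x, Q x) := hfinal
    _ = 8 * K * (∫ x, ∑ i, (u x i)^2) * (∫ x, ∑ i, ∑ j, (pderiv2 (fun y => u y i) j x)^2) := by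
        rw [hQeq]

/-- Estimate of the convection term in `L²` (core of Lemma 4.3 of the paper):
`‖u · ∇C‖_{L²} ≤ M ‖u‖^{1/2} ‖∇u‖^{1/2} ‖∇C‖^{1/2} ‖D²C‖^{1/2}`. -/
theorem convection_term_L2_estimate :
    ∃ M : ℝ, 0 < M ∧
      ∀ (u : (Fin 2 → ℝ) → (Fin 2 → ℝ)) (C : (Fin 2 → ℝ) → ℝ),
        ContDiff ℝ 1 u → HasCompactSupport u →
        ContDiff ℝ 2 C → HasCompactSupport C →
        (∫ x, (∑ i, u x i * pderiv2 C i x) ^ 2) ^ ((1 : ℝ) / 2) ≤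
          M * (∫ x, ∑ i, (u x i) ^ 2) ^ ((1 : ℝ) / 4) *
            (∫ x, ∑ i, ∑ j, (pderiv2 (fun y => u y i) j x) ^ 2) ^ ((1 : ℝ) / 4) *
            (∫ x, ∑ i, (pderiv2 C i x) ^ 2) ^ ((1 : ℝ) / 4) *
            (∫ x, ∑ i, ∑ j, (pderiv2 (pderiv2 C j) i x) ^ 2) ^ ((1 : ℝ) / 4) := by
  obtain ⟨K, hK0, hKv⟩ := lady_vec
  refine ⟨Real.sqrt K + 1, by positivity, fun u C hu h2u hC h2C => ?_⟩
  have hud : Differentiable ℝ u := hu.differentiable one_ne_zero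
  -- the gradient vector field of C
  set w : (Fin 2 → ℝ) → (Fin 2 → ℝ) := fun x i => fderiv ℝ C x (Pi.single i 1) with hwdef
  have hC1 : ContDiff ℝ 1 (fderiv ℝ C) := by
    have h2 : ContDiff ℝ ((1 : WithTop ℕ∞) + 1) C := by
      have e : ((1 : WithTop ℕ∞) + 1) = 2 := by norm_num
      rw [e]; exact hC
    exact (contDiff_succ_iff_fderiv.mp h2).2.2
  have hwcd : ContDiff ℝ 1 w := by
    apply contDiff_pi.mpr
    intro i
    exact (ContinuousLinearMap.apply ℝ ℝ ((Pi.single i 1 : Fin 2 → ℝ))).contDiff.comp hC1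
  have hws : HasCompactSupport w := by
    have : w = (fun L : (Fin 2 → ℝ) →L[ℝ] ℝ => fun i : Fin 2 => L (Pi.single i 1)) ∘
        fderiv ℝ C := rfl
    rw [this]
    exact (HasCompactSupport.fderiv (𝕜 := ℝ) h2C).comp_left (by funext i; simp)
  have hwc : Continuous w := hwcd.continuous
  -- the four quantities
  set A := ∫ x, ∑ i, (u x i)^2 with hA
  set B := ∫ x, ∑ i, ∑ j, (pderiv2 (fun y => u y i) j x)^2 with hB
  set R := ∫ x, ∑ i, (pderiv2 C i x)^2 with hR
  set S := ∫ x, ∑ i, ∑ j, (pderiv2 (pderiv2 C j) i x)^2 with hS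
  -- identify w with pderiv2 C
  have hwP : ∀ x i, w x i = pderiv2 C i x := fun x i => rfl
  have hwcomp : ∀ i, (fun y => w y i) = pderiv2 C i := fun i => rfl
  -- nonnegativity
  have hPu0 : ∀ x, (0:ℝ) ≤ ∑ i, (u x i)^2 := fun x => Finset.sum_nonneg fun i _ => sq_nonneg _
  have hPw0 : ∀ x, (0:ℝ) ≤ ∑ i, (w x i)^2 := fun x => Finset.sum_nonneg fun i _ => sq_nonneg _
  have hA0 : 0 ≤ A := integral_nonneg hPu0
  have hB0 : 0 ≤ B := integral_nonneg fun x =>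
    Finset.sum_nonneg fun i _ => Finset.sum_nonneg fun j _ => sq_nonneg _
  have hR0 : 0 ≤ R := integral_nonneg fun x => Finset.sum_nonneg fun i _ => sq_nonneg _
  have hS0 : 0 ≤ S := integral_nonneg fun x =>
    Finset.sum_nonneg fun i _ => Finset.sum_nonneg fun j _ => sq_nonneg _
  -- ladyzhenskaya for u and w
  have hlu : ∫ x, (∑ i, (u x i)^2)^2 ≤ K * A * B := hKv u hu h2u
  have hlw : ∫ x, (∑ i, (w x i)^2)^2 ≤ K * R * S := by
    have h := hKv w hwcd hws
    have e1 : (∫ x, ∑ i, (w x i)^2) = R := by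
      rw [hR]; rfl
    have e2 : (∫ x, ∑ i, ∑ j, (pderiv2 (fun y => w y i) j x)^2) = S := by
      rw [hS]
      congr 1
      funext x
      calc ∑ i, ∑ j, (pderiv2 (fun y => w y i) j x)^2
          = ∑ j, ∑ i, (pderiv2 (fun y => w y i) j x)^2 := Finset.sum_comm
        _ = ∑ i, ∑ j, (pderiv2 (pderiv2 C j) i x)^2 := rfl
    rw [e1, e2] at h
    exact h
  -- continuity and support facts
  have huc : Continuous u := hu.continuous
  have hPuc : Continuous (fun x => ∑ i, (u x i)^2) :=
    continuous_finset_sum _ fun i _ => ((continuous_apply i).comp huc).pow 2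
  have hPwc : Continuous (fun x => ∑ i, (w x i)^2) :=
    continuous_finset_sum _ fun i _ => ((continuous_apply i).comp hwc).pow 2
  have hPus : HasCompactSupport (fun x => ∑ i, (u x i)^2) := by
    have : (fun x => ∑ i, (u x i)^2) = (fun v : Fin 2 → ℝ => ∑ i, (v i)^2) ∘ u := rfl
    rw [this]; exact h2u.comp_left (by simp)
  have hPws : HasCompactSupport (fun x => ∑ i, (w x i)^2) := by
    have : (fun x => ∑ i, (w x i)^2) = (fun v : Fin 2 → ℝ => ∑ i, (v i)^2) ∘ w := rfl
    rw [this]; exact hws.comp_left (by simp)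
  -- step a : pointwise Cauchy-Schwarz then integrate
  have hstepa : (∫ x, (∑ i, u x i * pderiv2 C i x)^2) ≤
      ∫ x, (∑ i, (u x i)^2) * (∑ i, (w x i)^2) := by
    apply integral_mono_of_nonneg
    · exact Filter.Eventually.of_forall fun x => sq_nonneg _
    · apply Continuous.integrable_of_hasCompactSupport (hPuc.mul hPwc)
      exact hPws.mul_left
    · refine Filter.Eventually.of_forall fun x => ?_
      have := Finset.sum_mul_sq_le_sq_mul_sq Finset.univ (fun i => u x i)
        (fun i => pderiv2 C i x)
      simpa [hwP] using this
  -- step b : Hölder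
  have hstepb : ∫ x, (∑ i, (u x i)^2) * (∑ i, (w x i)^2) ≤
      Real.sqrt (∫ x, (∑ i, (u x i)^2)^2) * Real.sqrt (∫ x, (∑ i, (w x i)^2)^2) :=
    holder2 hPuc hPwc hPus hPws hPu0 hPw0
  -- combine
  have hL : (∫ x, (∑ i, u x i * pderiv2 C i x)^2) ≤
      K * (Real.sqrt A * Real.sqrt B * (Real.sqrt R * Real.sqrt S)) := by
    have h1 : Real.sqrt (∫ x, (∑ i, (u x i)^2)^2) ≤ Real.sqrt (K * A * B) :=
      Real.sqrt_le_sqrt hlu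
    have h2 : Real.sqrt (∫ x, (∑ i, (w x i)^2)^2) ≤ Real.sqrt (K * R * S) :=
      Real.sqrt_le_sqrt hlw
    have e1 : Real.sqrt (K * A * B) = Real.sqrt K * Real.sqrt A * Real.sqrt B := by
      rw [Real.sqrt_mul (by positivity), Real.sqrt_mul hK0]
    have e2 : Real.sqrt (K * R * S) = Real.sqrt K * Real.sqrt R * Real.sqrt S := by
      rw [Real.sqrt_mul (by positivity), Real.sqrt_mul hK0]
    calc (∫ x, (∑ i, u x i * pderiv2 C i x)^2)
        ≤ Real.sqrt (∫ x, (∑ i, (u x i)^2)^2) * Real.sqrt (∫ x, (∑ i, (w x i)^2)^2) :=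
          hstepa.trans hstepb
      _ ≤ Real.sqrt (K * A * B) * Real.sqrt (K * R * S) := by
          apply mul_le_mul h1 h2 (Real.sqrt_nonneg _) (Real.sqrt_nonneg _)
      _ = (Real.sqrt K * Real.sqrt A * Real.sqrt B) * (Real.sqrt K * Real.sqrt R * Real.sqrt S) := by
          rw [e1, e2]
      _ = (Real.sqrt K * Real.sqrt K) * (Real.sqrt A * Real.sqrt B * (Real.sqrt R * Real.sqrt S)) := by
          ring
      _ = K * (Real.sqrt A * Real.sqrt B * (Real.sqrt R * Real.sqrt S)) := by
          rw [Real.mul_self_sqrt hK0]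
  -- final power algebra
  have hL0 : 0 ≤ ∫ x, (∑ i, u x i * pderiv2 C i x)^2 :=
    integral_nonneg fun x => sq_nonneg _
  have hq : ∀ X : ℝ, 0 ≤ X → X ^ ((1:ℝ)/4) = Real.sqrt (Real.sqrt X) := by
    intro X hX
    rw [Real.sqrt_eq_rpow, Real.sqrt_eq_rpow, ← Real.rpow_mul hX]
    norm_num
  rw [← Real.sqrt_eq_rpow, hq A hA0, hq B hB0, hq R hR0, hq S hS0]
  calc Real.sqrt (∫ x, (∑ i, u x i * pderiv2 C i x)^2)
      ≤ Real.sqrt (K * (Real.sqrt A * Real.sqrt B * (Real.sqrt R * Real.sqrt S))) :=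
        Real.sqrt_le_sqrt hL
    _ = Real.sqrt K * (Real.sqrt (Real.sqrt A) * Real.sqrt (Real.sqrt B) *
        (Real.sqrt (Real.sqrt R) * Real.sqrt (Real.sqrt S))) := by
        rw [Real.sqrt_mul hK0, Real.sqrt_mul (by positivity),
          Real.sqrt_mul (by positivity), Real.sqrt_mul (Real.sqrt_nonneg R)]
    _ ≤ (Real.sqrt K + 1) * (Real.sqrt (Real.sqrt A) * Real.sqrt (Real.sqrt B) *
        (Real.sqrt (Real.sqrt R) * Real.sqrt (Real.sqrt S))) := by
        apply mul_le_mul_of_nonneg_right (by linarith [Real.sqrt_nonneg K]) (by positivity)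
    _ = (Real.sqrt K + 1) * Real.sqrt (Real.sqrt A) * Real.sqrt (Real.sqrt B) *
        Real.sqrt (Real.sqrt R) * Real.sqrt (Real.sqrt S) := by ring
end
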